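/- Let A = {a_1, a_2, …, a_n} be an n-element set of positive integers all of whose 2^n subset sums are pairwise distinct (as integers), and let N = 1 + a_1 + a_2 + … + a_n. If an element a_i of A satisfies a_i ≤ 2^{n-1} - 1, then 3·a_i < N. -/

import Mathlib

theorem stmt10 (n : ℕ) (A : Finset ℕ) (hpos : ∀ a ∈ A, 0 < a) (hcard : A.card = n)
    (hdss : ∀ B ⊆ A, ∀ C ⊆ A, (∑ x ∈ B, x) = (∑ x ∈ C, x) → B = C)
    (N : ℕ) (hN : N = 1 + ∑ a ∈ A, a)
    (a : ℕ) (ha : a ∈ A) (hle : a ≤ 2 ^ (n - 1) - 1) :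
    3 * a < N := by
  by_contra hcon
  push_neg at hcon
  have hapos : 0 < a := hpos a ha
  set A' := A.erase a with hA'
  have hsub : A' ⊆ A := Finset.erase_subset a A
  have hsum : ∑ x ∈ A', x + a = ∑ x ∈ A, x := Finset.sum_erase_add A _ ha
  -- the sum of A' is at most 2a - 1
  have hS' : ∑ x ∈ A', x + 1 ≤ 2 * a := by omega
  set T := A'.powerset.image (fun B => ∑ x ∈ B, x) with hT
  have hTcard : T.card = 2 ^ (n - 1) := by
    rw [hT, Finset.card_image_of_injOn, Finset.card_powerset, Finset.card_erase_of_mem ha,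
      hcard]
    intro B hB C hC hBC
    exact hdss B ((Finset.mem_powerset.mp hB).trans hsub) C
      ((Finset.mem_powerset.mp hC).trans hsub) hBC
  -- every element of T is < 2a
  have hTlt : ∀ t ∈ T, t < 2 * a := by
    intro t ht
    rw [hT, Finset.mem_image] at ht
    obtain ⟨B, hB, rfl⟩ := ht
    have : ∑ x ∈ B, x ≤ ∑ x ∈ A', x :=
      Finset.sum_le_sum_of_subset (Finset.mem_powerset.mp hB)
    omega
  -- no t and t + a both in T
  have hkey : ∀ t ∈ T, t + a ∉ T := by
    intro t ht hta
    rw [hT, Finset.mem_image] at ht hta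
    obtain ⟨B, hB, hBsum⟩ := ht
    obtain ⟨C, hC, hCsum⟩ := hta
    have hBsub : B ⊆ A' := Finset.mem_powerset.mp hB
    have hCsub : C ⊆ A' := Finset.mem_powerset.mp hC
    have haB : a ∉ B := fun h => Finset.notMem_erase a A (hBsub h)
    have haC : a ∉ C := fun h => Finset.notMem_erase a A (hCsub h)
    have hins : insert a B ⊆ A := by
      intro x hx
      rcases Finset.mem_insert.mp hx with rfl | hx
      · exact ha
      · exact hsub (hBsub hx)
    have hsumins : ∑ x ∈ insert a B, x = t + a := by
      rw [Finset.sum_insert haB, hBsum]; omega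
    have := hdss (insert a B) hins C (hCsub.trans hsub) (by rw [hsumins, hCsum])
    have : a ∈ C := this ▸ Finset.mem_insert_self a B
    exact haC this
  -- hence T injects into range a via mod a
  have hTle : T.card ≤ a := by
    have : T.card ≤ (Finset.range a).card := by
      apply Finset.card_le_card_of_injOn (fun t => t % a)
      · intro t ht
        exact Finset.mem_range.mpr (Nat.mod_lt t hapos)
      · intro t1 h1 t2 h2 heq
        simp only [Finset.mem_coe] at h1 h2
        have heq' : t1 % a = t2 % a := heq
        by_contra hne
        rcases Nat.lt_or_ge t1 t2 with hlt | hge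
        · have hd : a ∣ t2 - t1 := (Nat.modEq_iff_dvd' (le_of_lt hlt)).mp heq'
          obtain ⟨k, hk⟩ := hd
          have h2a := hTlt t2 h2
          have hk0 : k ≠ 0 := by rintro rfl; omega
          have hk2 : k < 2 := by
            by_contra h
            push_neg at h
            have : 2 * a ≤ a * k := by nlinarith
            omega
          have hk1 : k = 1 := by omega
          have : t1 + a = t2 := by subst hk1; omega
          exact hkey t1 h1 (this ▸ h2)
        · have hlt : t2 < t1 := lt_of_le_of_ne hge (fun h => hne h.symm)
          have hd : a ∣ t1 - t2 := (Nat.modEq_iff_dvd' (le_of_lt hlt)).mp heq'.symm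
          obtain ⟨k, hk⟩ := hd
          have h1a := hTlt t1 h1
          have hk0 : k ≠ 0 := by rintro rfl; omega
          have hk2 : k < 2 := by
            by_contra h
            push_neg at h
            have : 2 * a ≤ a * k := by nlinarith
            omega
          have hk1 : k = 1 := by omega
          have : t2 + a = t1 := by subst hk1; omega
          exact hkey t2 h2 (this ▸ h1)
    simpa using this
  have h1 : 0 < 2 ^ (n - 1) := Nat.pow_pos (by norm_num)
  omega
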